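/- Let n ≥ 2, d ≥ 1, and let p : {1,…,n} × {1,…,n} → ℝ^d, h ∈ ℝ^d, K, Q ∈ ℝ^{d×d}, and 𝒩 : ℝ^d → ℝ be arbitrary, and suppose the resulting 1-layer single-token output transformer T computes comp_n on all inputs. For a ∈ {2,…,n}, define x(a) = e^{⟨K p(1,a), Q h⟩} · p(1,a) ∈ ℝ^d and s(a) = e^{⟨K p(1,a), Q h⟩} ∈ ℝ. Then the hypothesis class H = { (x, s) ↦ 𝟙[𝒩(h + (x + y)/(s + q)) > 0] : (y, q) ∈ ℝ^d × ℝ } over domain ℝ^d × ℝ shatters the n − 1 points (x(2), s(2)), …, (x(n), s(n)); that is, for every δ : {2,…,n} → {0,1} there exist (y, q) ∈ ℝ^d × ℝ such that for all a ∈ {2,…,n}: 𝒩(h + (x(a) + y)/(s(a) + q)) > 0 if and only if δ(a) = 1. In particular, H has VC dimension at least n − 1. -/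

import Mathlib

/-- A 1-layer single-token output transformer of embedding dimension `d`
for input length `n` and alphabet `S`: a positional encoding `p`, an initial
value vector `h` of the output token, key and query matrices `K`, `Q`,
and an output function `N`. -/
structure Transformer (n d : ℕ) (S : Type*) where
  /-- positional encoding -/
  p : Fin n → S → (Fin d → ℝ)
  /-- initial value vector of the output token -/
  h : Fin d → ℝ
  /-- key matrix -/
  K : Matrix (Fin d) (Fin d) ℝ
  /-- query matrix -/
  Q : Matrix (Fin d) (Fin d) ℝ
  /-- output function -/
  N : (Fin d → ℝ) → ℝ

/-- The attention weight `e^{⟨K f_i, Q h⟩}` of input token `i`, where `f_i = p(i, x_i)`. -/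
noncomputable def Transformer.w {n d : ℕ} {S : Type*} (T : Transformer n d S)
    (x : Fin n → S) (i : Fin n) : ℝ :=
  Real.exp (dotProduct (T.K.mulVec (T.p i (x i))) (T.Q.mulVec T.h))

/-- The output of the transformer on input `x`: it computes the softmax average
`ĥ = (Σ_i e^{⟨K f_i, Q h⟩} f_i) / (Σ_i e^{⟨K f_i, Q h⟩})` and outputs `1` if
`N (h + ĥ) > 0`, and `0` otherwise. -/
noncomputable def Transformer.output {n d : ℕ} {S : Type*} (T : Transformer n d S)
    (x : Fin n → S) : ℕ :=
  if 0 < T.N (T.h + (∑ i, T.w x i)⁻¹ • ∑ i, T.w x i • T.p i (x i)) then 1 else 0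

/-- `IsMLP din dout F m` : the function `F : ℝ^din → ℝ^dout` is computable by a
feedforward circuit composing affine maps over `ℝ` and the coordinatewise ReLU
activation `t ↦ max (t, 0)`, using `m` ReLU gates in total. -/
inductive IsMLP : (din dout : ℕ) → ((Fin din → ℝ) → (Fin dout → ℝ)) → ℕ → Prop
  | affine {din dout : ℕ} (A : Matrix (Fin dout) (Fin din) ℝ) (b : Fin dout → ℝ) :
      IsMLP din dout (fun x => A.mulVec x + b) 0
  | relu (d : ℕ) : IsMLP d d (fun x i => max (x i) 0) d
  | comp {d₁ d₂ d₃ m₁ m₂ : ℕ} {f : (Fin d₁ → ℝ) → (Fin d₂ → ℝ)}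
      {g : (Fin d₂ → ℝ) → (Fin d₃ → ℝ)} :
      IsMLP d₁ d₂ f m₁ → IsMLP d₂ d₃ g m₂ → IsMLP d₁ d₃ (g ∘ f) (m₁ + m₂)

/-- `N : ℝ^d → ℝ` is a ReLU MLP with `m` ReLU neurons. -/
def IsReLUMLP (d m : ℕ) (N : (Fin d → ℝ) → ℝ) : Prop :=
  ∃ F : (Fin d → ℝ) → (Fin 1 → ℝ), IsMLP d 1 F m ∧ ∀ v, N v = F v 0

/-- The composition function `comp_n` : the alphabet `{1, …, n}` is modelled as `Fin n`
(index `i` standing for the symbol `i + 1`); with `φ = a`, the output is `1` if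
`φ(φ(1)) = 1` and `0` otherwise. -/
def comp {n : ℕ} (a : Fin n → Fin n) : ℕ :=
  if h : 0 < n then (if a (a ⟨0, h⟩) = ⟨0, h⟩ then 1 else 0) else 0

set_option maxHeartbeats 2000000 in
/-- Let `n ≥ 2`, `d ≥ 1`, and let `p`, `h`, `K`, `Q`, `N` be arbitrary components of a
1-layer single-token output transformer computing `comp_n` on all inputs.  For a symbol
`a` in `{2, …, n}` (modelled as `a : Fin n` with `1 ≤ a`), let
`x(a) = e^{⟨K p(1,a), Q h⟩} • p(1,a)` and `s(a) = e^{⟨K p(1,a), Q h⟩}`.  Then the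
hypothesis class `{(x, s) ↦ 𝟙[N (h + (x + y)/(s + q)) > 0] : (y, q) ∈ ℝ^d × ℝ}`
shatters the `n - 1` points `(x(a), s(a))`, `a ∈ {2, …, n}`: for every
`δ : {2, …, n} → {0, 1}` there exist `(y, q)` such that for all `a ∈ {2, …, n}`,
`N (h + (x(a) + y)/(s(a) + q)) > 0` iff `δ a = 1`.  In particular the class has
VC dimension at least `n - 1`. -/
theorem comp_transformer_shatters
    (n d : ℕ) (hn : 2 ≤ n) (hd : 1 ≤ d)
    (p : Fin n → Fin n → (Fin d → ℝ)) (h : Fin d → ℝ)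
    (K Q : Matrix (Fin d) (Fin d) ℝ) (N : (Fin d → ℝ) → ℝ)
    (hT : ∀ x : Fin n → Fin n, (Transformer.mk p h K Q N).output x = comp x)
    (xv : Fin n → (Fin d → ℝ)) (sv : Fin n → ℝ)
    (hx : ∀ a : Fin n, xv a =
      Real.exp (dotProduct (K.mulVec (p ⟨0, by omega⟩ a)) (Q.mulVec h)) •
        p ⟨0, by omega⟩ a)
    (hs : ∀ a : Fin n, sv a =
      Real.exp (dotProduct (K.mulVec (p ⟨0, by omega⟩ a)) (Q.mulVec h))) :
    ∀ δ : Fin n → Fin 2, ∃ (y : Fin d → ℝ) (q : ℝ),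
      ∀ a : Fin n, 1 ≤ (a : ℕ) →
        (0 < N (h + (sv a + q)⁻¹ • (xv a + y)) ↔ δ a = 1) := by
  classical
  intro δ
  have hn0 : 0 < n := by omega
  set z0 : Fin n := ⟨0, hn0⟩ with hz0
  set g : Fin n → Fin n := fun i => if δ i = 1 then ⟨0, by omega⟩ else ⟨1, by omega⟩ with hg
  set w : Fin n → ℝ :=
    fun i => Real.exp (dotProduct (K.mulVec (p i (g i))) (Q.mulVec h)) with hw
  refine ⟨∑ i ∈ Finset.univ.erase z0, w i • p i (g i),
    ∑ i ∈ Finset.univ.erase z0, w i, ?_⟩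
  intro a ha
  set z : Fin n → Fin n := fun i => if i = z0 then a else g i with hzdef
  have ha0 : a ≠ z0 := by
    intro hh
    rw [hh] at ha
    simp [hz0] at ha
  -- weights of the transformer on input z
  have hwz : ∀ i, i ≠ z0 → Transformer.w (Transformer.mk p h K Q N) z i = w i := by
    intro i hi
    simp [Transformer.w, hzdef, hi, hw]
  have hwz0 : Transformer.w (Transformer.mk p h K Q N) z z0 = sv a := by
    simp [Transformer.w, hzdef, hs a]
  have hmem : z0 ∈ (Finset.univ : Finset (Fin n)) := Finset.mem_univ _
  have hsum : (∑ i, Transformer.w (Transformer.mk p h K Q N) z i)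
      = sv a + ∑ i ∈ Finset.univ.erase z0, w i := by
    rw [← Finset.add_sum_erase _ _ hmem, hwz0]
    congr 1
    exact Finset.sum_congr rfl fun i hi => hwz i (Finset.ne_of_mem_erase hi)
  have hvsum : (∑ i, Transformer.w (Transformer.mk p h K Q N) z i • p i (z i))
      = xv a + ∑ i ∈ Finset.univ.erase z0, w i • p i (g i) := by
    rw [← Finset.add_sum_erase _ _ hmem, hwz0]
    congr 1
    · rw [hx a, hs a]
      simp [hzdef]
    · refine Finset.sum_congr rfl fun i hi => ?_
      have hi' := Finset.ne_of_mem_erase hi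
      rw [hwz i hi']
      simp [hzdef, hi']
  have hout := hT z
  rw [Transformer.output] at hout
  simp only [hsum, hvsum] at hout
  -- compute comp z
  have hza : z (z z0) = g a := by
    simp only [hzdef]
    simp [ha0]
  have hcomp : comp z = (if δ a = 1 then 1 else 0) := by
    rw [comp]
    rw [dif_pos hn0]
    have : z (z ⟨0, hn0⟩) = g a := hza
    rw [this, hg]
    by_cases hδ : δ a = 1
    · simp [hδ]
    · simp only [hδ, if_false]
      have : (⟨1, by omega⟩ : Fin n) ≠ ⟨0, hn0⟩ := by
        intro hh
        exact absurd (congrArg Fin.val hh) (by simp)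
      simp [this]
  rw [hcomp] at hout
  constructor
  · intro hpos
    by_contra hδ
    rw [if_neg hδ, if_pos hpos] at hout
    exact one_ne_zero hout
  · intro hδ
    by_contra hpos
    push_neg at hpos
    rw [if_pos hδ, if_neg (not_lt.mpr hpos)] at hout
    exact zero_ne_one hout
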